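/- Let (R, m, k) be a regular local ring of Krull dimension 2 and let x, y be a regular system of parameters (so m = (x, y)). Set I = m² = (x², xy, y²) and J = (x², y²). Then the colon ideal J : (xy) is strictly contained in the colon ideal (J·I) : ((xy)²). -/

import Mathlib

set_option maxHeartbeats 1000000


universe u v

open Ideal IsLocalRing

variable {A : Type*} [CommRing A]

lemma span_pair_pow_le (x y : A) (n : ℕ) (hn : 1 ≤ n) :
    span {x, y} ^ n ≤ span {x ^ n, y} := by
  induction n, hn using Nat.le_induction with
  | base => simp [pow_one]
  | succ n hn ih =>
    rw [pow_succ]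
    refine le_trans (Ideal.mul_mono ih le_rfl) ?_
    rw [Ideal.mul_le]
    intro r hr s hs
    obtain ⟨a, b, hab⟩ := Ideal.mem_span_pair.mp hr
    obtain ⟨c, d, hcd⟩ := Ideal.mem_span_pair.mp hs
    refine Ideal.mem_span_pair.mpr ⟨a * c, a * d * x ^ n + b * c * x + b * d * y, ?_⟩
    rw [← hab, ← hcd]; ring

lemma unit_of_not_mem_max [IsLocalRing A] {c : A} (h : c ∉ maximalIdeal A) : IsUnit c := by
  by_contra hc
  exact h (IsLocalRing.mem_maximalIdeal c |>.mpr hc)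

lemma exists_principal_bound [IsLocalRing A] [IsNoetherianRing A] [IsDomain A]
    (x y : A) (hm : maximalIdeal A = span {x, y})
    (hrel : x * y ∈ span {x ^ 2, y ^ 2}) :
    ∃ (z w : A) (k : ℕ), 1 ≤ k ∧ maximalIdeal A = span {z, w} ∧
      maximalIdeal A ^ k ≤ span {z} := by
  have hxm : x ∈ maximalIdeal A := by rw [hm]; exact subset_span (by simp)
  have hym : y ∈ maximalIdeal A := by rw [hm]; exact subset_span (by simp)
  set G : Prop := ∃ (z w : A) (k : ℕ), 1 ≤ k ∧ maximalIdeal A = span {z, w} ∧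
      maximalIdeal A ^ k ≤ span {z} with hG
  by_contra hcon
  -- then for all n ≥ 2 there is a unit u with u * (x*y) ∈ (x^n, y^n)
  have key : ∀ j : ℕ, ∃ (u c d : A), IsUnit u ∧ u * (x * y) = c * x ^ (j + 2) + d * y ^ (j + 2) := by
    intro j
    induction j with
    | zero =>
      obtain ⟨c, d, hcd⟩ := Ideal.mem_span_pair.mp hrel
      exact ⟨1, c, d, isUnit_one, by rw [one_mul, ← hcd]⟩
    | succ j ih =>
      obtain ⟨u, c, d, hu, h⟩ := ih
      by_cases hc : IsUnit c
      · -- x^(j+2) ∈ (y), so m^(j+2) ≤ (y) : contradiction with hcon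
        exfalso
        apply hcon
        obtain ⟨cu, hcu⟩ := hc
        have hx : x ^ (j + 2) ∈ span ({y} : Set A) := by
          have h1 : c * x ^ (j + 2) = u * (x * y) - d * y ^ (j + 2) := by
            rw [h]; ring
          have h2 : c * x ^ (j + 2) ∈ span ({y} : Set A) := by
            rw [h1]
            refine sub_mem ?_ ?_
            · exact Ideal.mem_span_singleton'.mpr ⟨u * x, by ring⟩
            · exact Ideal.mem_span_singleton'.mpr ⟨d * y ^ (j + 1), by ring⟩
          have : (↑cu⁻¹ : A) * (c * x ^ (j + 2)) ∈ span ({y} : Set A) :=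
            Ideal.mul_mem_left _ _ h2
          rwa [← hcu, ← mul_assoc, Units.inv_mul, one_mul] at this
        refine ⟨y, x, j + 2, by omega, by rw [hm, Set.pair_comm], ?_⟩
        rw [hm]
        refine le_trans (span_pair_pow_le x y (j+2) (by omega)) ?_
        rw [Ideal.span_le]
        rintro t (rfl | rfl)
        · exact hx
        · exact subset_span rfl
      by_cases hd : IsUnit d
      · exfalso
        apply hcon
        obtain ⟨du, hdu⟩ := hd
        have hy : y ^ (j + 2) ∈ span ({x} : Set A) := by
          have h1 : d * y ^ (j + 2) = u * (x * y) - c * x ^ (j + 2) := by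
            rw [h]; ring
          have h2 : d * y ^ (j + 2) ∈ span ({x} : Set A) := by
            rw [h1]
            refine sub_mem ?_ ?_
            · exact Ideal.mem_span_singleton'.mpr ⟨u * y, by ring⟩
            · exact Ideal.mem_span_singleton'.mpr ⟨c * x ^ (j + 1), by ring⟩
          have : (↑du⁻¹ : A) * (d * y ^ (j + 2)) ∈ span ({x} : Set A) :=
            Ideal.mul_mem_left _ _ h2
          rwa [← hdu, ← mul_assoc, Units.inv_mul, one_mul] at this
        refine ⟨x, y, j + 2, by omega, hm, ?_⟩
        rw [hm, Set.pair_comm]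
        refine le_trans (span_pair_pow_le y x (j+2) (by omega)) ?_
        rw [Ideal.span_le]
        rintro t (rfl | rfl)
        · exact hy
        · exact subset_span rfl
      · -- both nonunits
        have hcm : c ∈ maximalIdeal A := (IsLocalRing.mem_maximalIdeal c).mpr hc
        have hdm : d ∈ maximalIdeal A := (IsLocalRing.mem_maximalIdeal d).mpr hd
        rw [hm] at hcm hdm
        obtain ⟨c₁, c₂, hc12⟩ := Ideal.mem_span_pair.mp hcm
        obtain ⟨d₁, d₂, hd12⟩ := Ideal.mem_span_pair.mp hdm
        refine ⟨u - c₂ * x ^ (j + 1) - d₁ * y ^ (j + 1), c₁, d₂, ?_, ?_⟩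
        · apply unit_of_not_mem_max
          intro hmem
          have hum : u ∈ maximalIdeal A := by
            have : u = (u - c₂ * x ^ (j + 1) - d₁ * y ^ (j + 1)) + c₂ * x ^ (j + 1)
                + d₁ * y ^ (j + 1) := by ring
            rw [this]
            refine add_mem (add_mem hmem ?_) ?_
            · exact Ideal.mul_mem_left _ _ (Ideal.pow_mem_of_mem _ hxm _ (by omega))
            · exact Ideal.mul_mem_left _ _ (Ideal.pow_mem_of_mem _ hym _ (by omega))
          exact (mem_nonunits_iff.mp ((IsLocalRing.mem_maximalIdeal u).mp hum)) hu
        · have : u * (x * y) = (c₁ * x + c₂ * y) * x ^ (j + 2) + (d₁ * x + d₂ * y) * y ^ (j + 2) := by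
            rw [h, hc12, hd12]
          calc (u - c₂ * x ^ (j + 1) - d₁ * y ^ (j + 1)) * (x * y)
              = u * (x * y) - c₂ * x ^ (j + 1) * (x * y) - d₁ * y ^ (j + 1) * (x * y) := by ring
            _ = c₁ * x ^ (j + 3) + d₂ * y ^ (j + 3) := by rw [this]; ring
  have hxy0 : x * y = 0 := by
    have hmem : ∀ n : ℕ, x * y ∈ maximalIdeal A ^ n := by
      intro n
      obtain ⟨u, c, d, hu, h⟩ := key n
      obtain ⟨uu, huu⟩ := hu
      have heq : x * y = ↑uu⁻¹ * (c * x ^ (n + 2) + d * y ^ (n + 2)) := by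
        rw [← h, ← huu, ← mul_assoc, Units.inv_mul, one_mul]
      rw [heq]
      have hx : x ^ (n+2) ∈ maximalIdeal A ^ n :=
        Ideal.pow_le_pow_right (by omega) (Ideal.pow_mem_pow hxm (n+2))
      have hy : y ^ (n+2) ∈ maximalIdeal A ^ n :=
        Ideal.pow_le_pow_right (by omega) (Ideal.pow_mem_pow hym (n+2))
      exact Ideal.mul_mem_left _ _ (add_mem (Ideal.mul_mem_left _ _ hx) (Ideal.mul_mem_left _ _ hy))
    have hbot := Ideal.iInf_pow_eq_bot_of_isLocalRing (R := A) (I := maximalIdeal A)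
      (IsLocalRing.maximalIdeal.isMaximal A).ne_top
    have : x * y ∈ (⊥ : Ideal A) := hbot ▸ (Submodule.mem_iInf _).mpr hmem
    simpa using this
  rcases mul_eq_zero.mp hxy0 with h0 | h0
  · apply hcon
    refine ⟨y, x, 1, le_rfl, by rw [hm, Set.pair_comm], ?_⟩
    rw [pow_one, hm, Ideal.span_le]
    rintro t (rfl | rfl)
    · rw [h0]; exact zero_mem _
    · exact subset_span rfl
  · apply hcon
    refine ⟨x, y, 1, le_rfl, hm, ?_⟩
    rw [pow_one, hm, Ideal.span_le]
    rintro t (rfl | rfl)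
    · exact subset_span rfl
    · rw [h0]; exact zero_mem _

lemma no_chain [IsDomain A] [IsNoetherianRing A] [IsLocalRing A]
    (z w : A) (k : ℕ) (hk : 1 ≤ k) (hm : maximalIdeal A = span {z, w})
    (hpow : maximalIdeal A ^ k ≤ span {z})
    (q : Ideal A) (hq : q.IsPrime) (hq0 : q ≠ ⊥) (hqm : q < maximalIdeal A) : False := by
  haveI := hq
  have hzm : z ∈ maximalIdeal A := by rw [hm]; exact subset_span (by simp)
  have hwm : w ∈ maximalIdeal A := by rw [hm]; exact subset_span (by simp)
  have hznq : z ∉ q := by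
    intro hz
    have : maximalIdeal A ≤ q := hq.le_of_pow_le (le_trans hpow (by
      rw [Ideal.span_le]; rintro t rfl; exact hz))
    exact absurd (lt_of_lt_of_le hqm this) (lt_irrefl q)
  -- structure of ideals above (z)
  have claim : ∀ d i : ℕ, i + d = k + 1 → ∀ J : Ideal A,
      J ≤ span {z} ⊔ span {w ^ i} → ∃ i' ≤ k, J ⊔ span {z} = span {z} ⊔ span {w ^ i'} := by
    intro d
    induction d with
    | zero =>
      intro i hi J hJ
      have hwk : w ^ i ∈ span ({z} : Set A) := by
        have : w ^ i ∈ maximalIdeal A ^ k := by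
          have : w ^ i ∈ maximalIdeal A ^ i := Ideal.pow_mem_pow hwm i
          exact Ideal.pow_le_pow_right (by omega) this
        exact hpow this
      have hJz : J ≤ span {z} := by
        refine le_trans hJ (sup_le le_rfl ?_)
        rw [Ideal.span_le]; rintro t rfl; exact hwk
      refine ⟨k, le_rfl, ?_⟩
      have hwkk : w ^ k ∈ span ({z} : Set A) := hpow (Ideal.pow_mem_pow hwm k)
      rw [sup_of_le_right hJz, sup_of_le_left]
      rw [Ideal.span_le]; rintro t rfl; exact hwkk
    | succ d ih =>
      intro i hi J hJ
      by_cases hJ' : J ≤ span {z} ⊔ span {w ^ (i + 1)}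
      · exact ih (i + 1) (by omega) J hJ'
      · obtain ⟨v, hvJ, hv⟩ := SetLike.not_le_iff_exists.mp hJ'
        obtain ⟨s, hs, t, ht, hst⟩ := Submodule.mem_sup.mp (hJ hvJ)
        obtain ⟨a, ha⟩ := Ideal.mem_span_singleton'.mp hs
        obtain ⟨c, hc⟩ := Ideal.mem_span_singleton'.mp ht
        have hcu : IsUnit c := by
          apply unit_of_not_mem_max
          intro hcm
          rw [hm] at hcm
          obtain ⟨c₁, c₂, hc12⟩ := Ideal.mem_span_pair.mp hcm
          apply hv
          refine Submodule.mem_sup.mpr ⟨(a + c₁ * w ^ i) * z, ?_, c₂ * w ^ (i+1), ?_, ?_⟩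
          · exact Ideal.mem_span_singleton'.mpr ⟨a + c₁ * w ^ i, rfl⟩
          · exact Ideal.mem_span_singleton'.mpr ⟨c₂, rfl⟩
          · rw [← hst, ← ha, ← hc, ← hc12]; ring
        obtain ⟨cu, hcu⟩ := hcu
        refine ⟨i, by omega, ?_⟩
        apply le_antisymm
        · refine sup_le (le_trans hJ (sup_le le_sup_left ?_)) le_sup_left
          exact le_sup_right
        · refine sup_le ?_ ?_
          · rw [Ideal.span_le]; rintro u rfl; exact Submodule.mem_sup_right (subset_span rfl)
          · rw [Ideal.span_le]; rintro u rfl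
            have h1 : c * w ^ i = v - a * z := by rw [← hst, ← ha, ← hc]; ring
            have h2 : w ^ i = ↑cu⁻¹ * v - ↑cu⁻¹ * (a * z) := by
              rw [← mul_sub, ← h1, ← hcu, ← mul_assoc, Units.inv_mul, one_mul]
            rw [h2]
            refine sub_mem (Submodule.mem_sup_left (Ideal.mul_mem_left _ _ hvJ)) ?_
            exact Submodule.mem_sup_right (Ideal.mem_span_singleton'.mpr ⟨↑cu⁻¹ * a, by ring⟩)
  -- localization at q
  let S := Localization.AtPrime q
  let φ := algebraMap A S
  haveI : IsNoetherianRing S := IsLocalization.isNoetherianRing q.primeCompl S inferInstance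
  haveI : IsDomain S := IsLocalization.isDomain_of_local_atPrime hq
  set Q : ℕ → Ideal A := fun n => Ideal.comap φ ((Ideal.map φ q) ^ n) with hQdef
  have hQanti : ∀ {a b : ℕ}, a ≤ b → Q b ≤ Q a := fun hab =>
    Ideal.comap_mono (Ideal.pow_le_pow_right hab)
  have hQq : ∀ n : ℕ, 1 ≤ n → Q n ≤ q := by
    intro n hn
    have h1 : (Ideal.map φ q) ^ n ≤ Ideal.map φ q := Ideal.pow_le_self (by omega)
    refine le_trans (Ideal.comap_mono h1) ?_
    rw [Localization.AtPrime.map_eq_maximalIdeal]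
    exact Localization.AtPrime.under_maximalIdeal.le
  have hiex : ∀ n : ℕ, ∃ i' ≤ k, Q (n+1) ⊔ span {z} = span {z} ⊔ span {w ^ i'} := by
    intro n
    refine claim k 1 (by omega) _ ?_
    have h1 : Q (n+1) ≤ maximalIdeal A := le_trans (hQq (n+1) (by omega)) hqm.le
    rw [hm, Ideal.span_insert] at h1
    rwa [pow_one]
  choose g hg1 hg2 using hiex
  have hcard : Fintype.card (Fin (k+1)) < Fintype.card (Fin (k+2)) := by simp
  obtain ⟨n₁, n₂, hne, hfe⟩ := Fintype.exists_ne_map_eq_of_card_lt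
    (fun n : Fin (k+2) => (⟨g n, Nat.lt_succ_of_le (hg1 n)⟩ : Fin (k+1))) hcard
  have hgeq : g n₁ = g n₂ := by simpa using hfe
  -- wlog n₁ < n₂
  obtain ⟨n, m, hnm, hgnm⟩ : ∃ n m : ℕ, n < m ∧ g n = g m := by
    rcases hne.lt_or_gt with h | h
    · exact ⟨n₁, n₂, h, hgeq⟩
    · exact ⟨n₂, n₁, h, hgeq.symm⟩
  set N := n + 1 with hNdef
  have hD : Q N ⊔ span {z} = Q (N+1) ⊔ span {z} := by
    apply le_antisymm ?_ (sup_le_sup_right (hQanti (by omega)) _)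
    have e1 : Q (n+1) ⊔ span {z} = Q (m+1) ⊔ span {z} := by
      rw [hg2 n, hg2 m, hgnm]
    rw [hNdef, e1]
    exact sup_le_sup_right (hQanti (by omega)) _
  have hfg : (Q N).FG := IsNoetherian.noetherian _
  have hstep : Q N ≤ Q (N+1) ⊔ (maximalIdeal A) • (Q N) := by
    intro v hv
    have hvD : v ∈ Q (N+1) ⊔ span {z} := by rw [← hD]; exact Submodule.mem_sup_left hv
    obtain ⟨uQ, huQ, t, ht, hut⟩ := Submodule.mem_sup.mp hvD
    obtain ⟨c, hc⟩ := Ideal.mem_span_singleton'.mp ht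
    subst hc
    have hcz : c * z ∈ Q N := by
      have h1 : c * z = v - uQ := by rw [← hut]; ring
      rw [h1]
      exact sub_mem hv (hQanti (by omega) huQ)
    have hcQ : c ∈ Q N := by
      have hmem : φ (c * z) ∈ (Ideal.map φ q) ^ N := hcz
      obtain ⟨zu, hzu⟩ := IsLocalization.map_units S (⟨z, hznq⟩ : q.primeCompl)
      have hzu' : (↑zu : S) = φ z := hzu
      have h2 : φ c = φ (c * z) * ↑zu⁻¹ := by
        rw [RingHom.map_mul, ← hzu', mul_assoc, Units.mul_inv, mul_one]
      show φ c ∈ (Ideal.map φ q) ^ N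
      rw [h2]
      exact Ideal.mul_mem_right _ _ hmem
    refine Submodule.mem_sup.mpr ⟨uQ, huQ, c * z, ?_, hut⟩
    rw [smul_eq_mul, mul_comm c z]
    exact Ideal.mul_mem_mul hzm hcQ
  have hmjac : maximalIdeal A ≤ Ideal.jacobson ⊥ := by
    rw [IsLocalRing.jacobson_eq_maximalIdeal (⊥ : Ideal A) bot_ne_top]
  have hQeq : Q N = Q (N+1) := by
    have hh := Submodule.sup_eq_sup_smul_of_le_smul_of_le_jacobson hfg hmjac hstep
    rwa [Submodule.bot_smul, sup_bot_eq, sup_eq_right.mpr (hQanti (by omega : N ≤ N+1))] at hh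
  have hmap : (Ideal.map φ q) ^ N = (Ideal.map φ q) ^ (N+1) := by
    have hh := congrArg (Ideal.map φ) hQeq
    rwa [IsLocalization.map_comap q.primeCompl S, IsLocalization.map_comap q.primeCompl S] at hh
  have hSbot : (Ideal.map φ q) ^ N = ⊥ := by
    refine Submodule.eq_bot_of_le_smul_of_le_jacobson_bot (IsLocalRing.maximalIdeal S) _
      (IsNoetherian.noetherian _) ?_ ?_
    · rw [smul_eq_mul]
      exact le_of_eq <| calc (Ideal.map φ q) ^ N = (Ideal.map φ q) ^ (N+1) := hmap
        _ = IsLocalRing.maximalIdeal S * (Ideal.map φ q) ^ N := by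
            rw [pow_succ, Localization.AtPrime.map_eq_maximalIdeal, mul_comm]
    · rw [IsLocalRing.jacobson_eq_maximalIdeal (⊥ : Ideal S) bot_ne_top]
  obtain ⟨v, hvq, hv0⟩ := Submodule.ne_bot_iff q |>.mp hq0
  have h3 : (φ v) ^ N ∈ (Ideal.map φ q) ^ N :=
    Ideal.pow_mem_pow (Ideal.mem_map_of_mem φ hvq) N
  rw [hSbot] at h3
  have h4 : φ v = 0 := by
    have := (Submodule.mem_bot S).mp h3
    exact pow_eq_zero_iff (by omega : N ≠ 0) |>.mp this
  have h5 : Function.Injective φ := IsLocalization.injective S q.primeCompl_le_nonZeroDivisors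
  exact hv0 (h5 (by rw [h4, map_zero]))

lemma quotient_maximalIdeal [IsLocalRing A] (P : Ideal A) (hP : P ≠ ⊤)
    [IsLocalRing (A ⧸ P)] :
    maximalIdeal (A ⧸ P) = Ideal.map (Ideal.Quotient.mk P) (maximalIdeal A) := by
  have hPm : P ≤ maximalIdeal A := le_maximalIdeal hP
  apply le_antisymm
  · intro a ha
    obtain ⟨r, rfl⟩ := Ideal.Quotient.mk_surjective a
    have hr : r ∈ maximalIdeal A := by
      rw [IsLocalRing.mem_maximalIdeal, mem_nonunits_iff]
      intro hru
      exact (mem_nonunits_iff.mp ((IsLocalRing.mem_maximalIdeal _).mp ha)) (hru.map _)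
    exact Ideal.mem_map_of_mem _ hr
  · rw [Ideal.map_le_iff_le_comap]
    intro r hr
    rw [Ideal.mem_comap, IsLocalRing.mem_maximalIdeal, mem_nonunits_iff]
    intro hu
    obtain ⟨s, hs⟩ := isUnit_iff_exists_inv.mp hu
    obtain ⟨s', rfl⟩ := Ideal.Quotient.mk_surjective s
    rw [← _root_.map_mul, ← map_one (Ideal.Quotient.mk P), Ideal.Quotient.mk_eq_mk_iff_sub_mem] at hs
    have h1 : r * s' ∈ maximalIdeal A := Ideal.mul_mem_right _ _ hr
    have h2 : (1 : A) = r * s' - (r * s' - 1) := by ring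
    have : (1 : A) ∈ maximalIdeal A := by rw [h2]; exact sub_mem h1 (hPm hs)
    exact (mem_nonunits_iff.mp ((IsLocalRing.mem_maximalIdeal (1:A)).mp this)) isUnit_one

lemma crux {R : Type*} [CommRing R] [IsNoetherianRing R] [IsLocalRing R] (x y : R)
    (hdim : ringKrullDim R = 2) (hm : maximalIdeal R = span {x, y}) :
    x * y ∉ span {x ^ 2, y ^ 2} := by
  intro hrel
  -- a chain of primes of length 2
  obtain ⟨p, hp⟩ : ∃ p : LTSeries (PrimeSpectrum R), 2 ≤ p.length := by
    by_contra hno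
    push_neg at hno
    have h1 : ringKrullDim R ≤ 1 := by
      have hb : ∀ p : LTSeries (PrimeSpectrum R), (p.length : ℕ∞) ≤ (1 : ℕ∞) := fun p => by
        exact_mod_cast Nat.lt_succ_iff.mp (hno p)
      have h2 : (⨆ p : LTSeries (PrimeSpectrum R), (p.length : ℕ∞)) ≤ (1 : ℕ∞) := iSup_le hb
      rw [ringKrullDim, Order.krullDim_eq_iSup_length]
      have h3 : ((1:ℕ∞) : WithBot ℕ∞) = (1 : WithBot ℕ∞) := rfl
      rw [← h3]
      exact WithBot.coe_le_coe.mpr h2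
    rw [hdim] at h1
    have h4 : ((2:ℕ∞) : WithBot ℕ∞) ≤ ((1:ℕ∞) : WithBot ℕ∞) := by exact_mod_cast h1
    have h5 : (2:ℕ∞) ≤ (1:ℕ∞) := WithBot.coe_le_coe.mp h4
    have h6 : (2:ℕ) ≤ (1:ℕ) := by exact_mod_cast h5
    omega
  have h01 : (⟨0, by omega⟩ : Fin (p.length + 1)) < ⟨1, by omega⟩ := by
    simp [Fin.lt_def]
  have h12 : (⟨1, by omega⟩ : Fin (p.length + 1)) < ⟨2, by omega⟩ := by
    simp [Fin.lt_def]
  set P0 := (p ⟨0, by omega⟩).asIdeal with hP0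
  set P1 := (p ⟨1, by omega⟩).asIdeal with hP1
  set P2 := (p ⟨2, by omega⟩).asIdeal with hP2
  have hP01 : P0 < P1 := (PrimeSpectrum.asIdeal_lt_asIdeal _ _).mpr (p.strictMono h01)
  have hP12 : P1 < P2 := (PrimeSpectrum.asIdeal_lt_asIdeal _ _).mpr (p.strictMono h12)
  haveI hP0p : P0.IsPrime := (p ⟨0, by omega⟩).isPrime
  haveI hP1p : P1.IsPrime := (p ⟨1, by omega⟩).isPrime
  haveI hP2p : P2.IsPrime := (p ⟨2, by omega⟩).isPrime
  have hP2m : P2 ≤ maximalIdeal R := le_maximalIdeal hP2p.ne_top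
  -- pass to the quotient domain
  let A := R ⧸ P0
  let π := Ideal.Quotient.mk P0
  haveI : Nontrivial A := Ideal.Quotient.nontrivial_iff.mpr hP0p.ne_top
  haveI : IsLocalRing A := IsLocalRing.of_surjective' π Ideal.Quotient.mk_surjective
  have hmax : maximalIdeal A = Ideal.map π (maximalIdeal R) :=
    quotient_maximalIdeal P0 hP0p.ne_top
  have hmA : maximalIdeal A = span {π x, π y} := by
    rw [hmax, hm, Ideal.map_span]
    congr 1
    simp [Set.image_insert_eq]
  have hrelA : π x * π y ∈ span {π x ^ 2, π y ^ 2} := by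
    have h := Ideal.mem_map_of_mem π hrel
    rw [Ideal.map_span] at h
    have h2 : (⇑π '' {x ^ 2, y ^ 2}) = {π x ^ 2, π y ^ 2} := by
      simp [Set.image_insert_eq]
    rw [h2] at h
    rw [← _root_.map_mul]
    exact h
  -- the prime q in A
  have hker : RingHom.ker π ≤ P1 := by rw [Ideal.mk_ker]; exact hP01.le
  let q := Ideal.map π P1
  haveI hqp : q.IsPrime := Ideal.map_isPrime_of_surjective Ideal.Quotient.mk_surjective hker
  have hq0 : q ≠ ⊥ := by
    obtain ⟨v, hv1, hv0⟩ := SetLike.exists_of_lt hP01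
    intro hbot
    have : π v ∈ q := Ideal.mem_map_of_mem _ hv1
    rw [hbot, Submodule.mem_bot] at this
    exact hv0 (Ideal.Quotient.eq_zero_iff_mem.mp this)
  have hqm : q < maximalIdeal A := by
    rw [hmax]
    refine lt_of_le_of_ne (Ideal.map_mono (le_trans hP12.le hP2m)) ?_
    intro heq
    obtain ⟨v, hv2, hv1⟩ := SetLike.exists_of_lt hP12
    have hvm : π v ∈ Ideal.map π (maximalIdeal R) := Ideal.mem_map_of_mem _ (hP2m hv2)
    rw [← heq] at hvm
    have : v ∈ P1 := by
      have h2 := Ideal.comap_map_of_surjective π Ideal.Quotient.mk_surjective P1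
      have h3 : v ∈ Ideal.comap π (Ideal.map π P1) := hvm
      rw [h2] at h3
      rcases Submodule.mem_sup.mp h3 with ⟨a, ha, b, hb, rfl⟩
      rw [Ideal.mem_comap, Submodule.mem_bot] at hb
      exact add_mem ha (hP01.le (Ideal.Quotient.eq_zero_iff_mem.mp hb))
    exact hv1 this
  obtain ⟨z, w, k, hk, hzw, hpow⟩ := exists_principal_bound (π x) (π y) hmA hrelA
  exact no_chain z w k hk hzw hpow q hqp hq0 hqm


/-- In a regular local ring of Krull dimension `2` with regular system of parameters
`x, y`, setting `I = m² = (x², xy, y²)` and `J = (x², y²)`, the colon ideal `J : xy`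
is strictly contained in `(J·I) : (xy)²`. -/
theorem colon_lt_colon_sq {R : Type u} [CommRing R] [IsNoetherianRing R] [IsLocalRing R]
    (x y : R) (hdim : ringKrullDim R = 2)
    (hm : IsLocalRing.maximalIdeal R = Ideal.span {x, y})
    (I J : Ideal R) (hI : I = Ideal.span {x ^ 2, x * y, y ^ 2})
    (hI' : I = (IsLocalRing.maximalIdeal R) ^ 2)
    (hJ : J = Ideal.span {x ^ 2, y ^ 2}) :
    J.colon (Ideal.span {x * y}) < (J * I).colon (Ideal.span {(x * y) ^ 2}) := by
  have hxyJ : x * y ∉ J := by rw [hJ]; exact crux x y hdim hm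
  have hxyI : x * y ∈ I := by rw [hI]; exact subset_span (by simp)
  have hx2J : x ^ 2 ∈ J := by rw [hJ]; exact subset_span (by simp)
  have hy2I : y ^ 2 ∈ I := by rw [hI]; exact subset_span (by simp)
  rw [lt_iff_le_not_ge]
  constructor
  · intro r hr
    rw [Submodule.mem_colon_span_singleton, smul_eq_mul] at hr ⊢
    have h : r * (x * y) ^ 2 = r * (x * y) * (x * y) := by ring
    rw [h]
    exact Ideal.mul_mem_mul hr hxyI
  · intro hle
    have h1 : (1 : R) ∈ (J * I).colon (Ideal.span {(x * y) ^ 2}) := by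
      rw [Submodule.mem_colon_span_singleton, smul_eq_mul, one_mul]
      have h : (x * y) ^ 2 = x ^ 2 * y ^ 2 := by ring
      rw [h]
      exact Ideal.mul_mem_mul hx2J hy2I
    have h2 := hle h1
    rw [Submodule.mem_colon_span_singleton, smul_eq_mul, one_mul] at h2
    exact hxyJ h2
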